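/- arXiv:1204.6512 — 2 statements merged into one kernel-verified Lean document; each statement's English description precedes it below -/
import Mathlib

section
/- For every h > 0, every polynomial q of degree at most 2, and every x ∈ ℝ, interpolation with Monaghan's modified B-spline reproduces q exactly: ∑_{j ∈ ℤ} q(jh) · W₄(x − jh, h) = q(x). -/
/-- Monaghan's modified cubic B-spline interpolation kernel `W₄`. -/
noncomputable def W4 (x h : ℝ) : ℝ :=
  let s := |x| / h
  if s ≤ 1 then 1 - 5/2 * s^2 + 3/2 * s^3
  else if s ≤ 2 then 1/2 * (2 - s)^2 * (1 - s)
  else 0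

lemma W4_sc {h : ℝ} (hh : 0 < h) (y : ℝ) :
    W4 (y * h) h = if |y| ≤ 1 then 1 - 5/2 * |y|^2 + 3/2 * |y|^3
      else if |y| ≤ 2 then 1/2 * (2 - |y|)^2 * (1 - |y|) else 0 := by
  simp only [W4]
  rw [abs_mul, abs_of_pos hh, mul_div_assoc, div_self hh.ne', mul_one]

lemma W4_zero {h : ℝ} (hh : 0 < h) {y : ℝ} (hy : 2 ≤ |y|) : W4 (y * h) h = 0 := by
  rw [W4_sc hh]
  split_ifs with h1 h2
  · linarith
  · have : |y| = 2 := le_antisymm h2 hy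
    rw [this]; norm_num
  · rfl

/-- Interpolation with Monaghan's modified B-spline reproduces every polynomial of
degree at most 2 exactly. -/
theorem W4_reproduces_quadratics (h : ℝ) (hh : 0 < h) (q : Polynomial ℝ)
    (hq : q.degree ≤ 2) (x : ℝ) :
    ∑' j : ℤ, q.eval (j * h) * W4 (x - j * h) h = q.eval x := by
  set t := x / h with ht
  have hx : x = t * h := by rw [ht, div_mul_cancel₀ x hh.ne']
  set n := ⌊t⌋ with hn
  set u := Int.fract t with hu
  have hu0 : 0 ≤ u := Int.fract_nonneg t
  have hu1 : u < 1 := Int.fract_lt_one t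
  have htnu : t = (n : ℝ) + u := by rw [hu, Int.fract]; ring
  have hfl : (n : ℝ) ≤ t := Int.floor_le t
  have hfl2 : t < (n : ℝ) + 1 := Int.lt_floor_add_one t
  have hxj : ∀ j : ℤ, x - (j : ℝ) * h = (t - j) * h := by
    intro j; rw [hx]; ring
  have hsupp : ∀ j : ℤ, j ∉ ({n - 1, n, n + 1, n + 2} : Finset ℤ) →
      q.eval ((j : ℝ) * h) * W4 (x - (j : ℝ) * h) h = 0 := by
    intro j hj
    simp only [Finset.mem_insert, Finset.mem_singleton] at hj
    push_neg at hj
    have habs : 2 ≤ |t - (j : ℝ)| := by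
      rcases (by omega : j ≤ n - 2 ∨ n + 3 ≤ j) with hc | hc
      · have : (j : ℝ) ≤ (n : ℝ) - 2 := by exact_mod_cast (by omega : (j:ℤ) ≤ n - 2)
        rw [abs_of_nonneg (by linarith)]; linarith
      · have : (n : ℝ) + 3 ≤ (j : ℝ) := by exact_mod_cast (by omega : n + 3 ≤ j)
        rw [abs_of_nonpos (by linarith)]; linarith
    rw [hxj j, W4_zero hh habs, mul_zero]
  rw [tsum_eq_sum hsupp]
  have hsum : ∑ j ∈ ({n - 1, n, n + 1, n + 2} : Finset ℤ),
        q.eval ((j : ℝ) * h) * W4 (x - (j : ℝ) * h) h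
      = q.eval (((n : ℝ) - 1) * h) * W4 (x - ((n : ℝ) - 1) * h) h
        + q.eval ((n : ℝ) * h) * W4 (x - (n : ℝ) * h) h
        + q.eval (((n : ℝ) + 1) * h) * W4 (x - ((n : ℝ) + 1) * h) h
        + q.eval (((n : ℝ) + 2) * h) * W4 (x - ((n : ℝ) + 2) * h) h := by
    rw [Finset.sum_insert (by simp only [Finset.mem_insert, Finset.mem_singleton]; omega), Finset.sum_insert (by simp only [Finset.mem_insert, Finset.mem_singleton]; omega),
      Finset.sum_insert (by simp only [Finset.mem_insert, Finset.mem_singleton]; omega), Finset.sum_singleton]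
    push_cast
    ring
  rw [hsum]
  have e1 : x - ((n : ℝ) - 1) * h = (u + 1) * h := by rw [hx, htnu]; ring
  have e2 : x - (n : ℝ) * h = u * h := by rw [hx, htnu]; ring
  have e3 : x - ((n : ℝ) + 1) * h = (u - 1) * h := by rw [hx, htnu]; ring
  have e4 : x - ((n : ℝ) + 2) * h = (u - 2) * h := by rw [hx, htnu]; ring
  have w1 : W4 ((u + 1) * h) h = -(u * (1 - u) ^ 2) / 2 := by
    rw [W4_sc hh, abs_of_nonneg (by linarith)]
    split_ifs with h1 h2
    · have hu' : u = 0 := le_antisymm (by linarith) hu0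
      rw [hu']; norm_num
    · ring
    · exfalso; apply h2; linarith
  have w2 : W4 (u * h) h = 1 - 5/2 * u ^ 2 + 3/2 * u ^ 3 := by
    rw [W4_sc hh, abs_of_nonneg hu0, if_pos hu1.le]
  have w3 : W4 ((u - 1) * h) h = 1 - 5/2 * (1 - u) ^ 2 + 3/2 * (1 - u) ^ 3 := by
    rw [W4_sc hh, abs_of_nonpos (by linarith)]
    rw [if_pos (by linarith : -(u - 1) ≤ 1)]
    ring
  have w4 : W4 ((u - 2) * h) h = 1/2 * u ^ 2 * (u - 1) := by
    rw [W4_sc hh, abs_of_nonpos (by linarith)]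
    rw [if_neg (by intro hc; linarith : ¬(-(u - 2) ≤ 1)), if_pos (by linarith)]
    ring
  have hq3 : q.natDegree < 3 := by
    have h2 : q.natDegree ≤ 2 := Polynomial.natDegree_le_iff_degree_le.mpr hq
    omega
  have heval : ∀ y : ℝ, q.eval y = q.coeff 0 + q.coeff 1 * y + q.coeff 2 * y ^ 2 := by
    intro y
    rw [Polynomial.eval_eq_sum_range' hq3]
    simp [Finset.sum_range_succ]
  rw [e1, e2, e3, e4, w1, w2, w3, w4, hx, htnu]
  rw [heval, heval, heval, heval, heval]
  ring
end

section
/- For every h > 0, the first and second continuous moments of Monaghan's modified B-spline vanish: ∫_ℝ x · W₄(x, h) dx = 0 and ∫_ℝ x² · W₄(x, h) dx = 0. -/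
open MeasureTheory intervalIntegral

lemma W4_even (x h : ℝ) : W4 (-x) h = W4 x h := by simp [W4, abs_neg]

lemma W4_continuous (h : ℝ) (hh : 0 < h) : Continuous fun x : ℝ => W4 x h := by
  have hne : (h : ℝ) ≠ 0 := ne_of_gt hh
  unfold W4
  simp only
  apply Continuous.if_le
  · fun_prop
  · apply Continuous.if_le
    · fun_prop
    · exact continuous_const
    · fun_prop
    · exact continuous_const
    · intro x hx; rw [hx]; ring
  · fun_prop
  · exact continuous_const
  · intro x hx; rw [hx]; norm_num

lemma W4_zero_of (x h : ℝ) (hh : 0 < h) (hx : 2 * h < |x|) : W4 x h = 0 := by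
  have h1 : ¬ |x| / h ≤ 1 := by
    rw [not_le, lt_div_iff₀ hh]; nlinarith [abs_nonneg x]
  have h2 : ¬ |x| / h ≤ 2 := by
    rw [not_le, lt_div_iff₀ hh]; nlinarith
  simp [W4, h1, h2]

lemma W4_eq_on_01 (x h : ℝ) (hh : 0 < h) (h0 : 0 ≤ x) (h1 : x ≤ h) :
    x ^ 2 * W4 x h = x^2 - 5/(2*h^2) * x^4 + 3/(2*h^3) * x^5 := by
  have hne : (h:ℝ) ≠ 0 := ne_of_gt hh
  have habs : |x| = x := abs_of_nonneg h0
  have : |x| / h ≤ 1 := by rw [habs, div_le_one hh]; exact h1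
  simp only [W4, this, if_true]
  rw [habs]; field_simp

lemma W4_eq_on_12 (x h : ℝ) (hh : 0 < h) (h0 : h ≤ x) (h1 : x ≤ 2 * h) :
    x ^ 2 * W4 x h = 2*x^2 - 4/h * x^3 + 5/(2*h^2) * x^4 - 1/(2*h^3) * x^5 := by
  have hne : (h:ℝ) ≠ 0 := ne_of_gt hh
  have h0' : 0 ≤ x := le_trans hh.le h0
  have habs : |x| = x := abs_of_nonneg h0'
  by_cases hc : |x| / h ≤ 1
  · have hxh : x ≤ h := by rwa [habs, div_le_one hh] at hc
    have : x = h := le_antisymm hxh h0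
    subst this
    simp only [W4, hc, if_true]
    rw [habs]; field_simp; ring
  · have h2 : |x| / h ≤ 2 := by rw [habs, div_le_iff₀ hh]; linarith
    simp only [W4, hc, if_false, h2, if_true]
    rw [habs]; field_simp; ring

/-- The first and second continuous moments of Monaghan's modified B-spline vanish. -/
theorem W4_moments_vanish (h : ℝ) (hh : 0 < h) :
    (∫ x : ℝ, x * W4 x h) = 0 ∧ (∫ x : ℝ, x ^ 2 * W4 x h) = 0 := by
  have hne : (h:ℝ) ≠ 0 := ne_of_gt hh
  constructor
  · have key : (∫ x : ℝ, x * W4 x h) = ∫ x : ℝ, -(x * W4 x h) := by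
      conv_lhs => rw [← MeasureTheory.integral_neg_eq_self (fun x : ℝ => x * W4 x h)]
      congr 1; funext x; rw [W4_even]; ring
    rw [MeasureTheory.integral_neg] at key
    linarith
  · set f : ℝ → ℝ := fun x => x ^ 2 * W4 x h with hf
    have hfc : Continuous f := (continuous_pow 2).mul (W4_continuous h hh)
    have hint : ∀ a b : ℝ, IntervalIntegrable f volume a b :=
      fun a b => hfc.intervalIntegrable a b
    have hfe : ∀ x, f (-x) = f x := by intro x; simp [hf, W4_even, neg_sq]
    have hsupp : ∀ x ∉ Set.Icc (-(2*h)) (2*h), f x = 0 := by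
      intro x hx
      have habs : 2*h < |x| := by
        simp only [Set.mem_Icc, not_and_or, not_le] at hx
        rcases hx with hx | hx
        · rw [abs_of_neg (by linarith)]; linarith
        · rw [abs_of_pos (by linarith)]; linarith
      simp [hf, W4_zero_of x h hh habs]
    have h1 : (∫ x : ℝ, f x) = ∫ x in Set.Icc (-(2*h)) (2*h), f x :=
      (MeasureTheory.setIntegral_eq_integral_of_forall_compl_eq_zero hsupp).symm
    have h2 : (∫ x in Set.Icc (-(2*h)) (2*h), f x) = ∫ x in (-(2*h))..(2*h), f x := by
      rw [intervalIntegral.integral_of_le (by linarith), MeasureTheory.integral_Icc_eq_integral_Ioc]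
    have hsym : (∫ x in (-(2*h))..(0:ℝ), f x) = ∫ x in (0:ℝ)..(2*h), f x := by
      have := intervalIntegral.integral_comp_neg (a := (0:ℝ)) (b := 2*h) f
      simp only [hfe, neg_zero] at this
      exact this.symm
    have piece1 : (∫ x in (0:ℝ)..h, f x) = h^3/12 := by
      have hFd : ∀ x ∈ Set.uIcc (0:ℝ) h,
          HasDerivAt (fun x : ℝ => x^3/3 - 5/(2*h^2) * (x^5/5) + 3/(2*h^3) * (x^6/6)) (f x) x := by
        intro x hx
        rw [Set.uIcc_of_le (by linarith)] at hx
        have hW := W4_eq_on_01 x h hh hx.1 hx.2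
        have hd : HasDerivAt (fun x : ℝ => x^3/3 - 5/(2*h^2) * (x^5/5) + 3/(2*h^3) * (x^6/6))
            (x^2 - 5/(2*h^2) * x^4 + 3/(2*h^3) * x^5) x := by
          have h3 := (hasDerivAt_pow 3 x).div_const 3
          have h5 := ((hasDerivAt_pow 5 x).div_const 5).const_mul (5/(2*h^2))
          have h6 := ((hasDerivAt_pow 6 x).div_const 6).const_mul (3/(2*h^3))
          refine ((h3.sub h5).add h6).congr_deriv ?_
          push_cast; ring
        simpa [hf, hW] using hd
      rw [intervalIntegral.integral_eq_sub_of_hasDerivAt hFd (hint 0 h)]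
      field_simp; ring
    have piece2 : (∫ x in h..(2*h), f x) = -(h^3/12) := by
      have hFd : ∀ x ∈ Set.uIcc h (2*h),
          HasDerivAt (fun x : ℝ => 2*(x^3/3) - 4/h * (x^4/4) + 5/(2*h^2) * (x^5/5) - 1/(2*h^3) * (x^6/6)) (f x) x := by
        intro x hx
        rw [Set.uIcc_of_le (by linarith)] at hx
        have hW := W4_eq_on_12 x h hh hx.1 hx.2
        have hd : HasDerivAt (fun x : ℝ => 2*(x^3/3) - 4/h * (x^4/4) + 5/(2*h^2) * (x^5/5) - 1/(2*h^3) * (x^6/6))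
            (2*x^2 - 4/h * x^3 + 5/(2*h^2) * x^4 - 1/(2*h^3) * x^5) x := by
          have h3 := ((hasDerivAt_pow 3 x).div_const 3).const_mul (2:ℝ)
          have h4 := ((hasDerivAt_pow 4 x).div_const 4).const_mul (4/h)
          have h5 := ((hasDerivAt_pow 5 x).div_const 5).const_mul (5/(2*h^2))
          have h6 := ((hasDerivAt_pow 6 x).div_const 6).const_mul (1/(2*h^3))
          refine (((h3.sub h4).add h5).sub h6).congr_deriv ?_
          push_cast; ring
        simpa [hf, hW] using hd
      rw [intervalIntegral.integral_eq_sub_of_hasDerivAt hFd (hint h (2*h))]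
      field_simp; ring
    have hright : (∫ x in (0:ℝ)..(2*h), f x) = 0 := by
      rw [← intervalIntegral.integral_add_adjacent_intervals (hint 0 h) (hint h (2*h)),
        piece1, piece2]
      ring
    calc (∫ x : ℝ, f x) = ∫ x in (-(2*h))..(2*h), f x := by rw [h1, h2]
      _ = (∫ x in (-(2*h))..(0:ℝ), f x) + ∫ x in (0:ℝ)..(2*h), f x :=
          (intervalIntegral.integral_add_adjacent_intervals (hint _ _) (hint _ _)).symm
      _ = 0 := by rw [hsym, hright]; ring
end
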